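/- For all m, n ≥ 1 and k ≥ 0, the cardinality of U_{m,n}^(k) equals Σ_{ℓ'=1}^{m} Σ_{ℓ''=1}^{n} (S_m^k)_{1,ℓ'} · (S_n^k)_{1,ℓ''}, where (S_m^k)_{1,ℓ'} denotes the (1,ℓ') entry of the k-th power of the matrix S_m. -/

import Mathlib

open Finset

/-- `Π·h`: the vector whose `q`-th entry is the union of the `Π p` over all `p` with `h p = q`. -/
def dotAct {n : ℕ} (Pi : Fin n → Finset ℕ) (h : Fin n → Fin n) : Fin n → Finset ℕ :=
  fun q => (Finset.univ.filter (fun p => h p = q)).biUnion Pi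

/-- Entrywise union of two vectors of sets. -/
def vUnion {n : ℕ} (Pi Pi' : Fin n → Finset ℕ) : Fin n → Finset ℕ :=
  fun q => Pi q ∪ Pi' q

/-- `r = max (π₀ ∪ … ∪ π_{n−1})`. -/
def vMax {n : ℕ} (Pi : Fin n → Finset ℕ) : ℕ :=
  (Finset.univ.sup Pi).sup id

/-- `Π↑`: add `r = max (π₀ ∪ … ∪ π_{n−1})` to every element of every entry. -/
def vUp {n : ℕ} (Pi : Fin n → Finset ℕ) : Fin n → Finset ℕ :=
  fun q => (Pi q).image (· + vMax Pi)

/-- A `k`-EXPcomposition of size `n`: pairwise disjoint entries whose union is `{1,…,2^k}`. -/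
def IsEXP {n : ℕ} (k : ℕ) (Pi : Fin n → Finset ℕ) : Prop :=
  (∀ p q : Fin n, p ≠ q → Disjoint (Pi p) (Pi q)) ∧
    Finset.univ.sup Pi = Finset.Icc 1 (2 ^ k)

/-- A `k`-Rvalid vector of size `n`. -/
def IsRvalid {n : ℕ} (k : ℕ) (ρ : Fin n → Finset ℕ) : Prop :=
  IsEXP k ρ ∧ (∀ p : Fin n, p.val = 0 → 1 ∈ ρ p) ∧
    ∀ k' < k, ∀ i ∈ Finset.Icc 1 (2 ^ k'), ∀ j ∈ Finset.Icc 1 (2 ^ k'),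
      (∃ α, i ∈ ρ α ∧ j ∈ ρ α) → ∃ β, i + 2 ^ k' ∈ ρ β ∧ j + 2 ^ k' ∈ ρ β

/-- A `k`-Lvalid vector of size `m`. -/
def IsLvalid {m : ℕ} (k : ℕ) (lam : Fin m → Finset ℕ) : Prop :=
  IsEXP k lam ∧ (∀ p : Fin m, p.val = 0 → 2 ^ k ∈ lam p) ∧
    ∀ k' < k, ∀ i ∈ Finset.Icc 1 (2 ^ k'), ∀ j ∈ Finset.Icc 1 (2 ^ k'),
      (∃ α, 2 ^ k + 1 - i ∈ lam α ∧ 2 ^ k + 1 - j ∈ lam α) →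
        ∃ β, 2 ^ k + 1 - (i + 2 ^ k') ∈ lam β ∧ 2 ^ k + 1 - (j + 2 ^ k') ∈ lam β

/-- Number of nonempty entries of a vector of sets. -/
def nne {n : ℕ} (Pi : Fin n → Finset ℕ) : ℕ :=
  (Finset.univ.filter (fun q => Pi q ≠ ∅)).card

/-- `succ(P) = {P ∪ (P·g)↑ : g}`. -/
def succSet {n : ℕ} (P : Fin n → Finset ℕ) : Finset (Fin n → Finset ℕ) :=
  (Finset.univ : Finset (Fin n → Fin n)).image (fun g => vUnion P (vUp (dotAct P g)))

/-- The graded set `U_{m,n}^{(k)}` of U-pairs. -/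
def Uset (m n : ℕ) : ℕ → Set ((Fin m → Finset ℕ) × (Fin n → Finset ℕ))
  | 0 => {x | x = (fun p => if p.val = 0 then {1} else ∅,
                   fun q => if q.val = 0 then {1} else ∅)}
  | k + 1 => {x | ∃ L P, (L, P) ∈ Uset m n k ∧ ∃ (f : Fin m → Fin m) (g : Fin n → Fin n),
      x = (vUnion (dotAct L f) (vUp L), vUnion P (vUp (dotAct P g)))}

/-- The `r`-Stirling number: partitions of `{1,…,a}` into `b` nonempty blocks
with `1,…,r` in pairwise distinct blocks. -/
noncomputable def rStirling (a b r : ℕ) : ℕ :=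
  Set.ncard {C : Finset (Finset ℕ) |
    C.card = b ∧ (∅ ∉ C) ∧
    (∀ B ∈ C, ∀ B' ∈ C, B ≠ B' → Disjoint B B') ∧
    C.sup id = Finset.Icc 1 a ∧
    ∀ x ∈ Finset.Icc 1 r, ∀ y ∈ Finset.Icc 1 r, x ≠ y →
      ∀ B ∈ C, x ∈ B → y ∉ B}

/-- The Stirling number of the second kind: the number of partitions of an
`a`-element set into `b` nonempty blocks. -/
noncomputable def stirling2 (a b : ℕ) : ℕ := rStirling a b 0

/-- The entry `s_n^{(i,j)}` (with `1 ≤ i,j ≤ n`). -/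
noncomputable def sEntry (n i j : ℕ) : ℕ :=
  if i ≤ j then
    (j - i).factorial * Nat.choose (n - i) (j - i) *
      ∑ α ∈ Finset.Icc (j - i) i, Nat.choose i α * i ^ (i - α) * stirling2 α (j - i)
  else 0

/-- The matrix `S_n`, with rows and columns indexed by `{1,…,n}`. -/
noncomputable def Smat (n : ℕ) : Matrix (Fin n) (Fin n) ℕ :=
  fun i j => sEntry n (i.val + 1) (j.val + 1)

/-- One step of the shuffle-automaton action on subsets of the grid. -/
def stepE {m n : ℕ} (E : Finset (Fin m × Fin n)) (f : Fin m → Fin m) (g : Fin n → Fin n) :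
    Finset (Fin m × Fin n) :=
  E.image (fun p => (f p.1, p.2)) ∪ E.image (fun p => (p.1, g p.2))

/-- Reachability from `{(0,0)}` by finitely many steps. -/
def Reach {m n : ℕ} (hm : 0 < m) (hn : 0 < n) (E : Finset (Fin m × Fin n)) : Prop :=
  Relation.ReflTransGen (fun E1 E2 => ∃ f g, E2 = stepE E1 f g)
    {(⟨0, hm⟩, ⟨0, hn⟩)} E

/-- Reachability from `{(0,0)}` in at most `t` steps. -/
def ReachIn {m n : ℕ} (hm : 0 < m) (hn : 0 < n) :
    ℕ → Finset (Fin m × Fin n) → Prop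
  | 0, E => E = {(⟨0, hm⟩, ⟨0, hn⟩)}
  | t + 1, E => ReachIn hm hn t E ∨
      ∃ E' f g, ReachIn hm hn t E' ∧ E = stepE E' f g

/-- `s(Λ,P) = {(i,j) : λ_i ∩ ρ_j ≠ ∅}`. -/
def sTab {m n : ℕ} (L : Fin m → Finset ℕ) (P : Fin n → Finset ℕ) :
    Finset (Fin m × Fin n) :=
  Finset.univ.filter (fun p => (L p.1 ∩ P p.2).Nonempty)

section PartA
variable {a b : ℕ}

/-- the block of `y` under `f`, as a subset of `{1,…,a}`. -/
def blk (f : Fin a → Fin b) (y : Fin b) : Finset ℕ :=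
  (univ.filter (fun x => f x = y)).image (fun x : Fin a => (x : ℕ) + 1)

lemma mem_blk {f : Fin a → Fin b} {y : Fin b} {n : ℕ} :
    n ∈ blk f y ↔ ∃ x : Fin a, f x = y ∧ (x : ℕ) + 1 = n := by
  simp [blk]

def phi (f : Fin a → Fin b) : Finset (Finset ℕ) := univ.image (blk f)

def partFinset (a b : ℕ) : Finset (Finset (Finset ℕ)) :=
  ((Finset.Icc 1 a).powerset.powerset).filter (fun C => C.card = b ∧ ∅ ∉ C ∧
    (∀ B ∈ C, ∀ B' ∈ C, B ≠ B' → Disjoint B B') ∧ C.sup id = Finset.Icc 1 a)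

lemma mem_partFinset {C : Finset (Finset ℕ)} : C ∈ partFinset a b ↔
    C.card = b ∧ ∅ ∉ C ∧
    (∀ B ∈ C, ∀ B' ∈ C, B ≠ B' → Disjoint B B') ∧ C.sup id = Finset.Icc 1 a := by
  constructor
  · intro h; exact (Finset.mem_filter.mp h).2
  · intro h
    refine Finset.mem_filter.mpr ⟨?_, h⟩
    refine Finset.mem_powerset.mpr ?_
    intro B hB
    refine Finset.mem_powerset.mpr ?_
    have : id B ≤ C.sup id := Finset.le_sup hB
    rw [h.2.2.2] at this
    exact this

lemma stirling2_eq (a b : ℕ) : stirling2 a b = (partFinset a b).card := by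
  rw [stirling2, rStirling, ← Set.ncard_coe_finset]
  congr 1
  ext C
  simp only [Set.mem_setOf_eq, Finset.mem_coe, mem_partFinset]
  constructor
  · rintro ⟨h1, h2, h3, h4, -⟩; exact ⟨h1, h2, h3, h4⟩
  · rintro ⟨h1, h2, h3, h4⟩
    refine ⟨h1, h2, h3, h4, ?_⟩
    intro x hx
    simp only [Finset.mem_Icc] at hx
    omega

lemma blk_ne {f : Fin a → Fin b} (hf : Function.Surjective f) {y y' : Fin b}
    (h : y ≠ y') : blk f y ≠ blk f y' := by
  obtain ⟨x, hx⟩ := hf y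
  intro he
  have h1 : (x : ℕ) + 1 ∈ blk f y := mem_blk.mpr ⟨x, hx, rfl⟩
  rw [he] at h1
  obtain ⟨x', hx', hxx⟩ := mem_blk.mp h1
  have : x' = x := Fin.ext (by omega)
  exact h (by rw [← hx, ← hx', this])

lemma phi_mem {f : Fin a → Fin b} (hf : Function.Surjective f) :
    phi f ∈ partFinset a b := by
  rw [mem_partFinset]
  refine ⟨?_, ?_, ?_, ?_⟩
  · rw [phi, Finset.card_image_of_injOn, card_univ, Fintype.card_fin]
    intro y _ y' _ h
    by_contra hne
    exact blk_ne hf hne h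
  · intro h
    rw [phi, Finset.mem_image] at h
    obtain ⟨y, -, hy⟩ := h
    obtain ⟨x, hx⟩ := hf y
    have : (x : ℕ) + 1 ∈ blk f y := mem_blk.mpr ⟨x, hx, rfl⟩
    rw [hy] at this
    simp at this
  · intro B hB B' hB' hne
    rw [phi, Finset.mem_image] at hB hB'
    obtain ⟨y, -, hy⟩ := hB
    obtain ⟨y', -, hy'⟩ := hB'
    rw [Finset.disjoint_left]
    intro n hn hn'
    rw [← hy] at hn; rw [← hy'] at hn'
    obtain ⟨x, hx1, hx2⟩ := mem_blk.mp hn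
    obtain ⟨x', hx1', hx2'⟩ := mem_blk.mp hn'
    have : x = x' := Fin.ext (by omega)
    subst this
    exact hne (by rw [← hy, ← hy', ← hx1, hx1'])
  · ext n
    rw [Finset.mem_sup]
    simp only [phi, Finset.mem_image, Finset.mem_Icc]
    constructor
    · rintro ⟨B, ⟨y, -, rfl⟩, hn⟩
      obtain ⟨x, -, hx2⟩ := mem_blk.mp hn
      simp only [id] at hn ⊢
      omega
    · rintro ⟨h1, h2⟩
      refine ⟨blk f (f ⟨n - 1, by omega⟩), ⟨f ⟨n - 1, by omega⟩, Finset.mem_univ _, rfl⟩, ?_⟩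
      simp only [id]
      exact mem_blk.mpr ⟨⟨n - 1, by omega⟩, rfl, by simp; omega⟩

lemma fiber_card {C : Finset (Finset ℕ)} (hC : C ∈ partFinset a b) :
    (((univ : Finset (Fin a → Fin b)).filter (fun f => Function.Surjective f)).filter
      (fun f => phi f = C)).card = b.factorial := by
  obtain ⟨hcard, hempty, hdisj, hsup⟩ := mem_partFinset.mp hC
  have huniq : ∀ B ∈ C, ∀ B' ∈ C, ∀ n : ℕ, n ∈ B → n ∈ B' → B = B' := by
    intro B hB B' hB' n h h'
    by_contra hne
    exact (Finset.disjoint_left.mp (hdisj B hB B' hB' hne) h) h'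
  have hsub : ∀ B ∈ C, B ⊆ Finset.Icc 1 a := by
    intro B hB
    have : id B ≤ C.sup id := Finset.le_sup hB
    rwa [hsup] at this
  have hcardC : Fintype.card {B // B ∈ C} = b := by
    rw [Fintype.card_coe, hcard]
  -- target: embeddings Fin b ↪ {B // B ∈ C}
  have htot : (univ : Finset (Fin b ↪ {B // B ∈ C})).card = b.factorial := by
    rw [card_univ, Fintype.card_embedding_eq, hcardC, Fintype.card_fin,
      Nat.descFactorial_self]
  rw [← htot]
  refine Finset.card_bij
    (fun f hf => ⟨fun y => ⟨blk f y,
        by rw [← (Finset.mem_filter.mp hf).2]; exact Finset.mem_image_of_mem _ (Finset.mem_univ y)⟩,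
      by
        intro y y' h
        by_contra hne
        exact blk_ne (Finset.mem_filter.mp (Finset.mem_filter.mp hf).1).2 hne
          (congrArg Subtype.val h)⟩)
    (fun f hf => Finset.mem_univ _) ?_ ?_
  ·
    intro f hf f' hf' heq
    have hsurj : Function.Surjective f := (Finset.mem_filter.mp (Finset.mem_filter.mp hf).1).2
    have hphi : phi f = C := (Finset.mem_filter.mp hf).2
    have hphi' : phi f' = C := (Finset.mem_filter.mp hf').2
    have hblk : ∀ y, blk f y = blk f' y := by
      intro y
      have := congrFun (congrArg (fun (e : Fin b ↪ {B // B ∈ C}) => (e : Fin b → {B // B ∈ C})) heq) y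
      exact congrArg Subtype.val this
    funext x
    by_contra hne
    have h1 : (x : ℕ) + 1 ∈ blk f (f x) := mem_blk.mpr ⟨x, rfl, rfl⟩
    have h2 : (x : ℕ) + 1 ∈ blk f (f' x) := by
      rw [hblk (f' x)]; exact mem_blk.mpr ⟨x, rfl, rfl⟩
    have hm1 : blk f (f x) ∈ C := by rw [← hphi]; exact Finset.mem_image_of_mem _ (Finset.mem_univ _)
    have hm2 : blk f (f' x) ∈ C := by rw [← hphi]; exact Finset.mem_image_of_mem _ (Finset.mem_univ _)
    have := huniq _ hm1 _ hm2 _ h1 h2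
    exact blk_ne hsurj hne this
  ·
    intro g _
    have gsurj : Function.Surjective g := by
      have : Function.Bijective g :=
        (Fintype.bijective_iff_injective_and_card g).mpr ⟨g.injective, by simp [hcardC]⟩
      exact this.2
    have hex : ∀ x : Fin a, ∃ y : Fin b, (x : ℕ) + 1 ∈ (g y).val := by
      intro x
      have hx : (x : ℕ) + 1 ∈ C.sup id := by
        rw [hsup]; simp only [Finset.mem_Icc]; omega
      rw [Finset.mem_sup] at hx
      obtain ⟨B, hB, hxB⟩ := hx
      obtain ⟨y, hy⟩ := gsurj ⟨B, hB⟩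
      exact ⟨y, by rw [hy]; exact hxB⟩
    choose F hF using hex
    have hblkF : ∀ y, blk F y = (g y).val := by
      intro y
      ext n
      rw [mem_blk]
      constructor
      · rintro ⟨x, rfl, rfl⟩
        exact hF x
      · intro hn
        have hBmem : (g y).val ∈ C := (g y).2
        have hn' : n ∈ Finset.Icc 1 a := hsub _ hBmem hn
        simp only [Finset.mem_Icc] at hn'
        have hx0 : ∃ x0 : Fin a, (x0 : ℕ) + 1 = n := ⟨⟨n - 1, by omega⟩, by simp; omega⟩
        obtain ⟨x0, h1⟩ := hx0
        refine ⟨x0, ?_, h1⟩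
        have h2 : n ∈ (g (F x0)).val := by have := hF x0; rwa [h1] at this
        have h3 : (g (F x0)).val = (g y).val := huniq _ (g _).2 _ (g y).2 n h2 hn
        exact g.injective (Subtype.ext h3)
    have hFsurj : Function.Surjective F := by
      intro y
      have hBmem : (g y).val ∈ C := (g y).2
      have hne : (g y).val ≠ ∅ := fun h => hempty (h ▸ hBmem)
      obtain ⟨n, hn⟩ := Finset.nonempty_iff_ne_empty.mpr hne
      have : n ∈ blk F y := by rw [hblkF]; exact hn
      obtain ⟨x, hx, -⟩ := mem_blk.mp this
      exact ⟨x, hx⟩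
    have hphiF : phi F = C := by
      ext B
      rw [phi, Finset.mem_image]
      constructor
      · rintro ⟨y, -, rfl⟩
        rw [hblkF]; exact (g y).2
      · intro hB
        obtain ⟨y, hy⟩ := gsurj ⟨B, hB⟩
        exact ⟨y, Finset.mem_univ _, by rw [hblkF, hy]⟩
    refine ⟨F, ?_, ?_⟩
    · refine Finset.mem_filter.mpr ⟨Finset.mem_filter.mpr ⟨Finset.mem_univ _, hFsurj⟩, hphiF⟩
    · ext y
      · simp [hblkF]

lemma card_surjs (a b : ℕ) :
    ((univ : Finset (Fin a → Fin b)).filter (fun f => Function.Surjective f)).card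
      = b.factorial * stirling2 a b := by
  rw [stirling2_eq]
  rw [Finset.card_eq_sum_card_fiberwise (f := phi) (t := partFinset a b)
    (fun f hf => phi_mem (Finset.mem_filter.mp hf).2)]
  rw [Finset.sum_congr rfl (fun C hC => fiber_card hC)]
  rw [Finset.sum_const, smul_eq_mul, mul_comm]

lemma card_surj_filter_eq {γ δ γ' δ' : Type*} [Fintype γ] [Fintype δ] [Fintype γ'] [Fintype δ']
    [DecidableEq γ] [DecidableEq δ] [DecidableEq γ'] [DecidableEq δ']
    (e : γ ≃ γ') (e' : δ ≃ δ') :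
    ((univ : Finset (γ → δ)).filter (fun f => Function.Surjective f)).card =
    ((univ : Finset (γ' → δ')).filter (fun f => Function.Surjective f)).card := by
  refine Finset.card_bij (fun f _ => e' ∘ f ∘ e.symm) ?_ ?_ ?_
  · intro f hf
    refine Finset.mem_filter.mpr ⟨Finset.mem_univ _, ?_⟩
    have hs := (Finset.mem_filter.mp hf).2
    exact e'.surjective.comp (hs.comp e.symm.surjective)
  · intro f hf f' hf' h
    funext x
    have := congrFun h (e x)
    simp only [Function.comp_apply, Equiv.symm_apply_apply] at this
    exact e'.injective this
  · intro g hg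
    refine ⟨e'.symm ∘ g ∘ e, Finset.mem_filter.mpr ⟨Finset.mem_univ _, ?_⟩, ?_⟩
    · exact e'.symm.surjective.comp (((Finset.mem_filter.mp hg).2).comp e.surjective)
    · funext x; simp

lemma card_surj_filter (γ δ : Type*) [Fintype γ] [Fintype δ] [DecidableEq γ] [DecidableEq δ] :
    ((univ : Finset (γ → δ)).filter (fun f => Function.Surjective f)).card
      = (Fintype.card δ).factorial * stirling2 (Fintype.card γ) (Fintype.card δ) := by
  rw [card_surj_filter_eq (Fintype.equivFin γ) (Fintype.equivFin δ), card_surjs]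

lemma stirling2_eq_zero {α d : ℕ} (h : α < d) : stirling2 α d = 0 := by
  have h0 : ((univ : Finset (Fin α → Fin d)).filter (fun f => Function.Surjective f)) = ∅ := by
    rw [Finset.eq_empty_iff_forall_notMem]
    intro f hf
    have := Fintype.card_le_of_surjective f (Finset.mem_filter.mp hf).2
    simp only [Fintype.card_fin] at this
    omega
  have h1 := card_surjs α d
  rw [h0] at h1
  simp only [Finset.card_empty] at h1
  rcases Nat.mul_eq_zero.mp h1.symm with h' | h'
  · exact absurd h' (Nat.factorial_ne_zero d)
  · exact h'

end PartA

section PartB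
variable {γ : Type*} [Fintype γ] [DecidableEq γ]

lemma count_T (m : ℕ) (S T : Finset (Fin m)) (i d : ℕ)
    (hγ : Fintype.card γ = i) (hS : S.card = i) (hT : T.card = d) (hdisj : Disjoint T S) :
    ((univ : Finset (γ → Fin m)).filter (fun g => univ.image g \ S = T)).card
      = ∑ α ∈ Finset.Icc d i,
          Nat.choose i α * (d.factorial * stirling2 α d) * i ^ (i - α) := by
  have hcond : ∀ g : γ → Fin m,
      univ.image g \ S = T ↔ ((∀ x, g x ∈ S ∪ T) ∧ ∀ t ∈ T, ∃ x : γ, g x = t) := by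
    intro g
    constructor
    · intro h
      constructor
      · intro x
        by_cases hx : g x ∈ S
        · exact Finset.mem_union_left _ hx
        · refine Finset.mem_union_right _ ?_
          rw [← h]
          exact Finset.mem_sdiff.mpr ⟨Finset.mem_image_of_mem g (Finset.mem_univ x), hx⟩
      · intro t ht
        rw [← h] at ht
        obtain ⟨x, -, hx⟩ := Finset.mem_image.mp (Finset.mem_sdiff.mp ht).1
        exact ⟨x, hx⟩
    · rintro ⟨h1, h2⟩
      ext y
      rw [Finset.mem_sdiff, Finset.mem_image]
      constructor
      · rintro ⟨⟨x, -, rfl⟩, hyS⟩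
        rcases Finset.mem_union.mp (h1 x) with h | h
        · exact absurd h hyS
        · exact h
      · intro hy
        obtain ⟨x, hx⟩ := h2 y hy
        exact ⟨⟨x, Finset.mem_univ x, hx⟩, fun hyS => (Finset.disjoint_left.mp hdisj hy) hyS⟩
  -- fiberwise over the preimage of T
  rw [Finset.card_eq_sum_card_fiberwise
    (f := fun g : γ → Fin m => univ.filter (fun x => g x ∈ T)) (t := (univ : Finset γ).powerset)
    (fun g _ => Finset.mem_powerset.mpr (Finset.filter_subset _ _))]
  have fiber_eq : ∀ A : Finset γ,
      ((univ.filter (fun g : γ → Fin m => univ.image g \ S = T)).filter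
        (fun g => univ.filter (fun x => g x ∈ T) = A)).card
      = d.factorial * stirling2 A.card d * i ^ (i - A.card) := by
    intro A
    have key : ((univ.filter (fun g : γ → Fin m => univ.image g \ S = T)).filter
        (fun g => univ.filter (fun x => g x ∈ T) = A)).card
        = (((univ : Finset ({x : γ // x ∈ A} → {y // y ∈ T})).filter
              (fun h => Function.Surjective h)) ×ˢ
           (univ : Finset ({x : γ // x ∉ A} → {y // y ∈ S}))).card := by
      refine Finset.card_bij (fun g hg =>
        (fun x => ⟨g x.val, by
          have hA : univ.filter (fun x => g x ∈ T) = A := (Finset.mem_filter.mp hg).2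
          obtain ⟨xv, hxv⟩ := x
          rw [← hA] at hxv
          exact (Finset.mem_filter.mp hxv).2⟩,
         fun x => ⟨g x.val, by
          have hg1 := (Finset.mem_filter.mp (Finset.mem_filter.mp hg).1).2
          have hA : univ.filter (fun x => g x ∈ T) = A := (Finset.mem_filter.mp hg).2
          have hnT : g x.val ∉ T := by
            intro hT'
            obtain ⟨xv, hxv⟩ := x
            have hmem : xv ∈ univ.filter (fun x => g x ∈ T) :=
              Finset.mem_filter.mpr ⟨Finset.mem_univ _, hT'⟩
            rw [hA] at hmem
            exact hxv hmem
          rcases Finset.mem_union.mp (((hcond g).mp hg1).1 x.val) with h | h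
          · exact h
          · exact absurd h hnT⟩)) ?_ ?_ ?_
      · intro g hg
        refine Finset.mem_product.mpr ⟨Finset.mem_filter.mpr ⟨Finset.mem_univ _, ?_⟩,
          Finset.mem_univ _⟩
        rintro ⟨t, ht⟩
        have hg1 := (Finset.mem_filter.mp (Finset.mem_filter.mp hg).1).2
        have hA : univ.filter (fun x => g x ∈ T) = A := (Finset.mem_filter.mp hg).2
        obtain ⟨x, hx⟩ := ((hcond g).mp hg1).2 t ht
        have hxA : x ∈ A := by
          rw [← hA]
          exact Finset.mem_filter.mpr ⟨Finset.mem_univ _, by rw [hx]; exact ht⟩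
        exact ⟨⟨x, hxA⟩, Subtype.ext hx⟩
      · intro g hg g' hg' h
        have h1 := congrArg Prod.fst h
        have h2 := congrArg Prod.snd h
        simp only at h1 h2
        funext x
        by_cases hx : x ∈ A
        · have := congrFun h1 ⟨x, hx⟩
          exact congrArg Subtype.val this
        · have := congrFun h2 ⟨x, hx⟩
          exact congrArg Subtype.val this
      · rintro ⟨h1, h2⟩ hmem
        have hh1 : Function.Surjective h1 :=
          (Finset.mem_filter.mp (Finset.mem_product.mp hmem).1).2
        refine ⟨fun x => if hx : x ∈ A then (h1 ⟨x, hx⟩).val else (h2 ⟨x, hx⟩).val, ?_, ?_⟩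
        · have hAfil : univ.filter
              (fun x => (if hx : x ∈ A then (h1 ⟨x, hx⟩).val else (h2 ⟨x, hx⟩).val) ∈ T) = A := by
            ext x
            simp only [Finset.mem_filter, Finset.mem_univ, true_and]
            by_cases hx : x ∈ A
            · simp only [dif_pos hx]
              exact ⟨fun _ => hx, fun _ => (h1 ⟨x, hx⟩).2⟩
            · simp only [dif_neg hx]
              constructor
              · intro hT'
                exact absurd hT' (Finset.disjoint_left.mp hdisj.symm (h2 ⟨x, hx⟩).2)
              · intro h; exact absurd h hx
          refine Finset.mem_filter.mpr ⟨Finset.mem_filter.mpr ⟨Finset.mem_univ _, ?_⟩, hAfil⟩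
          refine (hcond _).mpr ⟨?_, ?_⟩
          · intro x
            by_cases hx : x ∈ A
            · simp only [dif_pos hx]
              exact Finset.mem_union_right _ (h1 ⟨x, hx⟩).2
            · simp only [dif_neg hx]
              exact Finset.mem_union_left _ (h2 ⟨x, hx⟩).2
          · intro t ht
            obtain ⟨⟨x, hx⟩, hx'⟩ := hh1 ⟨t, ht⟩
            refine ⟨x, ?_⟩
            simp only [dif_pos hx]
            rw [hx']
        · refine Prod.ext ?_ ?_
          · funext x
            refine Subtype.ext ?_
            simp only [dif_pos x.2]
          · funext x
            refine Subtype.ext ?_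
            simp only [dif_neg x.2]
    rw [key, Finset.card_product]
    congr 1
    · rw [card_surj_filter]
      congr 2 <;> simp [Fintype.card_coe, hT]
    · rw [Finset.card_univ, Fintype.card_fun]
      congr 1
      · simp [Fintype.card_coe, hS]
      · rw [Fintype.card_subtype_compl]
        simp [Fintype.card_coe, hγ]
  rw [Finset.sum_congr rfl (fun A _ => fiber_eq A)]
  -- group by cardinality
  rw [← Finset.sum_fiberwise_of_maps_to
    (g := Finset.card) (t := Finset.range (i + 1))
    (fun A hA => Finset.mem_range.mpr (by
      have := Finset.card_le_card (Finset.mem_powerset.mp hA)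
      rw [Finset.card_univ, hγ] at this
      omega))]
  have inner : ∀ α ∈ Finset.range (i + 1),
      ∑ A ∈ (univ : Finset γ).powerset.filter (fun A => A.card = α),
        d.factorial * stirling2 A.card d * i ^ (i - A.card)
      = Nat.choose i α * (d.factorial * stirling2 α d * i ^ (i - α)) := by
    intro α _
    rw [Finset.sum_congr rfl (fun A hA => by
      rw [(Finset.mem_filter.mp hA).2])]
    rw [Finset.sum_const, ← Finset.powersetCard_eq_filter, Finset.card_powersetCard,
      Finset.card_univ, hγ, smul_eq_mul]
  rw [Finset.sum_congr rfl inner]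
  rw [← Finset.sum_subset (by
    intro α hα
    simp only [Finset.mem_Icc] at hα
    exact Finset.mem_range.mpr (by omega) : Finset.Icc d i ⊆ Finset.range (i+1))]
  · exact Finset.sum_congr rfl (fun α _ => by ring)
  · intro α hα hα'
    have : α < d := by
      simp only [Finset.mem_range] at hα
      simp only [Finset.mem_Icc] at hα'
      omega
    rw [stirling2_eq_zero this]
    ring

lemma count_main (m j : ℕ) (S : Finset (Fin m)) (i : ℕ)
    (hγ : Fintype.card γ = i) (hS : S.card = i) :
    ((univ : Finset (γ → Fin m)).filter
      (fun g => ((univ.image g) ∪ S).card = j)).card = sEntry m i j := by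
  by_cases hij : i ≤ j
  case neg =>
    rw [sEntry, if_neg hij, Finset.filter_false_of_mem, Finset.card_empty]
    intro g _
    intro h
    have h1 : S.card ≤ (univ.image g ∪ S).card :=
      Finset.card_le_card Finset.subset_union_right
    omega
  case pos =>
    set d := j - i with hd
    have hmaps : ∀ g ∈ (univ : Finset (γ → Fin m)).filter
        (fun g => ((univ.image g) ∪ S).card = j),
        univ.image g \ S ∈ Finset.powersetCard d Sᶜ := by
      intro g hg
      rw [Finset.mem_powersetCard]
      constructor
      · intro x hx
        exact Finset.mem_compl.mpr (Finset.mem_sdiff.mp hx).2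
      · have hcardeq := (Finset.mem_filter.mp hg).2
        have hun := Finset.card_sdiff_add_card (univ.image g) S
        omega
    rw [Finset.card_eq_sum_card_fiberwise hmaps]
    have step : ∀ T ∈ Finset.powersetCard d Sᶜ,
        ((univ.filter (fun g : γ → Fin m => ((univ.image g) ∪ S).card = j)).filter
          (fun g => univ.image g \ S = T)).card
        = ∑ α ∈ Finset.Icc d i,
            Nat.choose i α * (d.factorial * stirling2 α d) * i ^ (i - α) := by
      intro T hT
      rw [Finset.mem_powersetCard] at hT
      have hTS : Disjoint T S := by
        rw [Finset.disjoint_left]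
        intro x hx
        exact Finset.mem_compl.mp (hT.1 hx)
      have heq : (univ.filter (fun g : γ → Fin m => ((univ.image g) ∪ S).card = j)).filter
          (fun g => univ.image g \ S = T)
          = univ.filter (fun g : γ → Fin m => univ.image g \ S = T) := by
        rw [Finset.filter_filter]
        apply Finset.filter_congr
        intro g _
        constructor
        · rintro ⟨-, h⟩; exact h
        · intro h
          refine ⟨?_, h⟩
          have hun := Finset.card_sdiff_add_card (univ.image g) S
          rw [h, hT.2] at hun
          omega
      rw [heq]
      exact count_T m S T i d hγ hS hT.2 hTS
    rw [Finset.sum_congr rfl step, Finset.sum_const, Finset.card_powersetCard,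
      Finset.card_compl, Fintype.card_fin, hS, smul_eq_mul]
    rw [sEntry, if_pos hij, ← hd]
    rw [Finset.mul_sum, Finset.mul_sum]
    apply Finset.sum_congr rfl
    intro α _
    ring

end PartB


section PartC
variable {m : ℕ}

def supp (L : Fin m → Finset ℕ) : Finset (Fin m) := univ.filter (fun q => L q ≠ ∅)

lemma nne_eq_supp (L : Fin m → Finset ℕ) : nne L = (supp L).card := rfl

def stepL (L : Fin m → Finset ℕ) (f : Fin m → Fin m) : Fin m → Finset ℕ :=
  vUnion (dotAct L f) (vUp L)

def stepP (P : Fin m → Finset ℕ) (g : Fin m → Fin m) : Fin m → Finset ℕ :=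
  vUnion P (vUp (dotAct P g))

def baseVec (m : ℕ) : Fin m → Finset ℕ := fun p => if p.val = 0 then {1} else ∅

def chain (step : (Fin m → Finset ℕ) → (Fin m → Fin m) → (Fin m → Finset ℕ)) :
    ℕ → Finset (Fin m → Finset ℕ)
  | 0 => {baseVec m}
  | k + 1 => ((chain step k) ×ˢ (univ : Finset (Fin m → Fin m))).image (fun x => step x.1 x.2)

structure StepGood (m : ℕ)
    (step : (Fin m → Finset ℕ) → (Fin m → Fin m) → (Fin m → Finset ℕ)) : Prop where
  congr : ∀ L f f', (∀ p ∈ supp L, f p = f' p) → step L f = step L f'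
  inj : ∀ k L L' f f', IsEXP k L → IsEXP k L' → step L f = step L' f' →
    L = L' ∧ ∀ p ∈ supp L, f p = f' p
  suppEq : ∀ L f, supp (step L f) = (supp L).image f ∪ supp L
  inv : ∀ k L f, IsEXP k L → IsEXP (k + 1) (step L f)

lemma mem_dotAct {L : Fin m → Finset ℕ} {f : Fin m → Fin m} {q : Fin m} {n : ℕ} :
    n ∈ dotAct L f q ↔ ∃ p, f p = q ∧ n ∈ L p := by
  simp [dotAct]

lemma mem_vUp {L : Fin m → Finset ℕ} {q : Fin m} {n : ℕ} :
    n ∈ vUp L q ↔ ∃ x ∈ L q, x + vMax L = n := by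
  simp [vUp]

lemma mem_sup_univ {L : Fin m → Finset ℕ} {n : ℕ} :
    n ∈ univ.sup L ↔ ∃ p, n ∈ L p := by
  rw [Finset.mem_sup]; simp

lemma sup_dotAct (L : Fin m → Finset ℕ) (f : Fin m → Fin m) :
    univ.sup (dotAct L f) = univ.sup L := by
  ext n
  rw [mem_sup_univ, mem_sup_univ]
  constructor
  · rintro ⟨q, hq⟩
    obtain ⟨p, -, hp⟩ := mem_dotAct.mp hq
    exact ⟨p, hp⟩
  · rintro ⟨p, hp⟩
    exact ⟨f p, mem_dotAct.mpr ⟨p, rfl, hp⟩⟩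

lemma vMax_eq {k : ℕ} {L : Fin m → Finset ℕ} (hE : univ.sup L = Finset.Icc 1 (2 ^ k)) :
    vMax L = 2 ^ k := by
  have h1 : 1 ≤ 2 ^ k := Nat.one_le_pow k 2 (by norm_num)
  rw [vMax, hE]
  apply le_antisymm
  · exact Finset.sup_le (fun n hn => (Finset.mem_Icc.mp hn).2)
  · exact Finset.le_sup (f := id) (Finset.mem_Icc.mpr ⟨h1, le_refl _⟩)

lemma entry_subset {k : ℕ} {L : Fin m → Finset ℕ} (hE : univ.sup L = Finset.Icc 1 (2 ^ k))
    (p : Fin m) : L p ⊆ Finset.Icc 1 (2 ^ k) := by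
  intro n hn
  rw [← hE]
  exact mem_sup_univ.mpr ⟨p, hn⟩

lemma stepL_apply (L : Fin m → Finset ℕ) (f : Fin m → Fin m) (q : Fin m) :
    stepL L f q = dotAct L f q ∪ (L q).image (· + vMax L) := rfl

lemma stepP_apply (P : Fin m → Finset ℕ) (g : Fin m → Fin m) (q : Fin m) :
    stepP P g q = P q ∪ (dotAct P g q).image (· + vMax (dotAct P g)) := rfl

lemma mem_supp {L : Fin m → Finset ℕ} {q : Fin m} : q ∈ supp L ↔ L q ≠ ∅ := by
  simp [supp]

lemma stepGoodL : StepGood m stepL := by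
  constructor
  · -- congr
    intro L f f' h
    funext q
    rw [stepL_apply, stepL_apply]
    congr 1
    ext n
    rw [mem_dotAct, mem_dotAct]
    constructor
    · rintro ⟨p, rfl, hn⟩
      exact ⟨p, (h p (mem_supp.mpr (Finset.ne_empty_of_mem hn))).symm, hn⟩
    · rintro ⟨p, rfl, hn⟩
      exact ⟨p, h p (mem_supp.mpr (Finset.ne_empty_of_mem hn)), hn⟩
  · -- inj
    intro k L L' f f' hE hE' heq
    have hmax : vMax L = 2 ^ k := vMax_eq hE.2
    have hmax' : vMax L' = 2 ^ k := vMax_eq hE'.2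
    have recL : ∀ (M : Fin m → Finset ℕ) (g : Fin m → Fin m), IsEXP k M → ∀ q,
        ((stepL M g q).filter (fun n => 2 ^ k < n)).image (fun n => n - 2 ^ k) = M q := by
      intro M g hM q
      have hmaxM : vMax M = 2 ^ k := vMax_eq hM.2
      ext x
      simp only [Finset.mem_image, Finset.mem_filter]
      constructor
      · rintro ⟨y, ⟨hy, hy2⟩, rfl⟩
        rw [stepL_apply, Finset.mem_union] at hy
        rcases hy with hy | hy
        · obtain ⟨p, -, hp⟩ := mem_dotAct.mp hy
          have := Finset.mem_Icc.mp (entry_subset hM.2 p hp)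
          omega
        · obtain ⟨z, hz, rfl⟩ := Finset.mem_image.mp hy
          rw [hmaxM]
          simpa using hz
      · intro hx
        have hx1 := Finset.mem_Icc.mp (entry_subset hM.2 q hx)
        refine ⟨x + 2 ^ k, ⟨?_, by omega⟩, by omega⟩
        rw [stepL_apply, Finset.mem_union]
        right
        exact Finset.mem_image.mpr ⟨x, hx, by rw [hmaxM]⟩
    have hLL' : L = L' := by
      funext q
      rw [← recL L f hE q, ← recL L' f' hE' q, heq]
    subst hLL'
    refine ⟨rfl, ?_⟩
    -- dotAct parts equal
    have hdot : dotAct L f = dotAct L f' := by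
      funext q
      have h1 : ∀ (g : Fin m → Fin m), dotAct L g q = (stepL L g q).filter (fun n => n ≤ 2 ^ k) := by
        intro g
        ext n
        rw [stepL_apply, Finset.mem_filter, Finset.mem_union]
        constructor
        · intro hn
          obtain ⟨p, -, hp⟩ := mem_dotAct.mp hn
          have := Finset.mem_Icc.mp (entry_subset hE.2 p hp)
          exact ⟨Or.inl hn, by omega⟩
        · rintro ⟨hn | hn, hle⟩
          · exact hn
          · obtain ⟨z, hz, rfl⟩ := Finset.mem_image.mp hn
            have := Finset.mem_Icc.mp (entry_subset hE.2 q hz)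
            rw [hmax] at hle
            omega
      rw [h1 f, h1 f', heq]
    intro p hp
    obtain ⟨x, hx⟩ := Finset.nonempty_iff_ne_empty.mpr (mem_supp.mp hp)
    have h1 : x ∈ dotAct L f (f p) := mem_dotAct.mpr ⟨p, rfl, hx⟩
    rw [hdot] at h1
    obtain ⟨p', hp', hxp'⟩ := mem_dotAct.mp h1
    have : p = p' := by
      by_contra hne
      exact (Finset.disjoint_left.mp (hE.1 p p' hne) hx) hxp'
    subst this
    exact hp'.symm
  · -- suppEq
    intro L f
    ext q
    simp only [mem_supp, Finset.mem_union, Finset.mem_image]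
    rw [← Finset.nonempty_iff_ne_empty]
    constructor
    · rintro ⟨n, hn⟩
      rw [stepL_apply, Finset.mem_union] at hn
      rcases hn with hn | hn
      · obtain ⟨p, rfl, hp⟩ := mem_dotAct.mp hn
        exact Or.inl ⟨p, Finset.ne_empty_of_mem hp, rfl⟩
      · obtain ⟨z, hz, -⟩ := Finset.mem_image.mp hn
        exact Or.inr (Finset.ne_empty_of_mem hz)
    · rintro (⟨p, hp, rfl⟩ | h)
      · obtain ⟨x, hx⟩ := Finset.nonempty_iff_ne_empty.mpr hp
        exact ⟨x, by rw [stepL_apply]; exact Finset.mem_union_left _ (mem_dotAct.mpr ⟨p, rfl, hx⟩)⟩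
      · obtain ⟨x, hx⟩ := Finset.nonempty_iff_ne_empty.mpr h
        exact ⟨x + vMax L, by
          rw [stepL_apply]
          exact Finset.mem_union_right _ (Finset.mem_image.mpr ⟨x, hx, rfl⟩)⟩
  · -- inv
    intro k L f hE
    have hmax : vMax L = 2 ^ k := vMax_eq hE.2
    have h1 : 1 ≤ 2 ^ k := Nat.one_le_pow k 2 (by norm_num)
    have h2 : 2 ^ (k + 1) = 2 ^ k + 2 ^ k := by rw [pow_succ]; omega
    constructor
    · intro q q' hne
      rw [Finset.disjoint_left]
      intro n hn hn'
      rw [stepL_apply, Finset.mem_union] at hn hn'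
      rcases hn with hn | hn <;> rcases hn' with hn' | hn'
      · obtain ⟨p, rfl, hp⟩ := mem_dotAct.mp hn
        obtain ⟨p', hfp', hp'⟩ := mem_dotAct.mp hn'
        have : p ≠ p' := fun h => hne (h ▸ hfp')
        exact (Finset.disjoint_left.mp (hE.1 p p' this) hp) hp'
      · obtain ⟨p, -, hp⟩ := mem_dotAct.mp hn
        obtain ⟨z, hz, hzz⟩ := Finset.mem_image.mp hn'
        have hb1 := Finset.mem_Icc.mp (entry_subset hE.2 p hp)
        have hb2 := Finset.mem_Icc.mp (entry_subset hE.2 q' hz)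
        rw [hmax] at hzz
        omega
      · obtain ⟨p, -, hp⟩ := mem_dotAct.mp hn'
        obtain ⟨z, hz, hzz⟩ := Finset.mem_image.mp hn
        have hb1 := Finset.mem_Icc.mp (entry_subset hE.2 p hp)
        have hb2 := Finset.mem_Icc.mp (entry_subset hE.2 q hz)
        rw [hmax] at hzz
        omega
      · obtain ⟨z, hz, hzz⟩ := Finset.mem_image.mp hn
        obtain ⟨z', hz', hzz'⟩ := Finset.mem_image.mp hn'
        have : z = z' := by rw [hmax] at hzz hzz'; omega
        subst this
        exact (Finset.disjoint_left.mp (hE.1 q q' hne) hz) hz'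
    · ext n
      rw [mem_sup_univ, Finset.mem_Icc]
      constructor
      · rintro ⟨q, hq⟩
        rw [stepL_apply, Finset.mem_union] at hq
        rcases hq with hq | hq
        · obtain ⟨p, -, hp⟩ := mem_dotAct.mp hq
          have := Finset.mem_Icc.mp (entry_subset hE.2 p hp)
          omega
        · obtain ⟨z, hz, hzz⟩ := Finset.mem_image.mp hq
          have := Finset.mem_Icc.mp (entry_subset hE.2 q hz)
          rw [hmax] at hzz
          omega
      · rintro ⟨hn1, hn2⟩
        by_cases hle : n ≤ 2 ^ k
        · have : n ∈ univ.sup L := by rw [hE.2]; exact Finset.mem_Icc.mpr ⟨hn1, hle⟩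
          obtain ⟨p, hp⟩ := mem_sup_univ.mp this
          exact ⟨f p, by rw [stepL_apply]; exact Finset.mem_union_left _ (mem_dotAct.mpr ⟨p, rfl, hp⟩)⟩
        · have : n - 2 ^ k ∈ univ.sup L := by
            rw [hE.2]; exact Finset.mem_Icc.mpr ⟨by omega, by omega⟩
          obtain ⟨p, hp⟩ := mem_sup_univ.mp this
          exact ⟨p, by
            rw [stepL_apply]
            exact Finset.mem_union_right _
              (Finset.mem_image.mpr ⟨n - 2 ^ k, hp, by rw [hmax]; omega⟩)⟩


lemma dotAct_disjoint {P : Fin m → Finset ℕ} {g : Fin m → Fin m}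
    (hdisjP : ∀ p q : Fin m, p ≠ q → Disjoint (P p) (P q)) :
    ∀ q q' : Fin m, q ≠ q' → Disjoint (dotAct P g q) (dotAct P g q') := by
  intro q q' hne
  rw [Finset.disjoint_left]
  intro n hn hn'
  obtain ⟨p, rfl, hp⟩ := mem_dotAct.mp hn
  obtain ⟨p', hgp', hp'⟩ := mem_dotAct.mp hn'
  have hpp : p ≠ p' := fun h => hne (h ▸ hgp')
  exact (Finset.disjoint_left.mp (hdisjP p p' hpp) hp) hp'

lemma stepGoodP : StepGood m stepP := by
  constructor
  · -- congr
    intro P g g' h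
    have hd : dotAct P g = dotAct P g' := by
      funext q
      ext n
      rw [mem_dotAct, mem_dotAct]
      constructor
      · rintro ⟨p, rfl, hn⟩
        exact ⟨p, (h p (mem_supp.mpr (Finset.ne_empty_of_mem hn))).symm, hn⟩
      · rintro ⟨p, rfl, hn⟩
        exact ⟨p, h p (mem_supp.mpr (Finset.ne_empty_of_mem hn)), hn⟩
    unfold stepP
    rw [hd]
  · -- inj
    intro k P P' g g' hE hE' heq
    have hsupd : univ.sup (dotAct P g) = Finset.Icc 1 (2 ^ k) := by
      rw [sup_dotAct, hE.2]
    have hsupd' : univ.sup (dotAct P' g') = Finset.Icc 1 (2 ^ k) := by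
      rw [sup_dotAct, hE'.2]
    have recP : ∀ (M : Fin m → Finset ℕ) (g : Fin m → Fin m), IsEXP k M → ∀ q,
        (stepP M g q).filter (fun n => n ≤ 2 ^ k) = M q := by
      intro M g hM q
      have hsupM : univ.sup (dotAct M g) = Finset.Icc 1 (2 ^ k) := by
        rw [sup_dotAct, hM.2]
      have hmaxM : vMax (dotAct M g) = 2 ^ k := vMax_eq hsupM
      ext x
      rw [Finset.mem_filter, stepP_apply, Finset.mem_union]
      constructor
      · rintro ⟨hx | hx, hle⟩
        · exact hx
        · obtain ⟨z, hz, rfl⟩ := Finset.mem_image.mp hx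
          have := Finset.mem_Icc.mp (entry_subset hsupM q hz)
          rw [hmaxM] at hle
          omega
      · intro hx
        have := Finset.mem_Icc.mp (entry_subset hM.2 q hx)
        exact ⟨Or.inl hx, by omega⟩
    have hPP' : P = P' := by
      funext q
      rw [← recP P g hE q, ← recP P' g' hE' q, heq]
    subst hPP'
    refine ⟨rfl, ?_⟩
    have hdot : dotAct P g = dotAct P g' := by
      funext q
      have h1 : ∀ (gg : Fin m → Fin m), univ.sup (dotAct P gg) = Finset.Icc 1 (2 ^ k) →
          dotAct P gg q = ((stepP P gg q).filter (fun n => 2 ^ k < n)).image (fun n => n - 2 ^ k) := by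
        intro gg hsupgg
        have hmaxgg : vMax (dotAct P gg) = 2 ^ k := vMax_eq hsupgg
        ext x
        simp only [Finset.mem_image, Finset.mem_filter]
        constructor
        · intro hx
          have hx1 := Finset.mem_Icc.mp (entry_subset hsupgg q hx)
          refine ⟨x + 2 ^ k, ⟨?_, by omega⟩, by omega⟩
          rw [stepP_apply, Finset.mem_union]
          right
          exact Finset.mem_image.mpr ⟨x, hx, by rw [hmaxgg]⟩
        · rintro ⟨y, ⟨hy, hy2⟩, rfl⟩
          rw [stepP_apply, Finset.mem_union] at hy
          rcases hy with hy | hy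
          · have := Finset.mem_Icc.mp (entry_subset hE.2 q hy)
            omega
          · obtain ⟨z, hz, rfl⟩ := Finset.mem_image.mp hy
            rw [hmaxgg]
            simpa using hz
      rw [h1 g hsupd, h1 g' hsupd', heq]
    intro p hp
    obtain ⟨x, hx⟩ := Finset.nonempty_iff_ne_empty.mpr (mem_supp.mp hp)
    have h1 : x ∈ dotAct P g (g p) := mem_dotAct.mpr ⟨p, rfl, hx⟩
    rw [hdot] at h1
    obtain ⟨p', hp', hxp'⟩ := mem_dotAct.mp h1
    have : p = p' := by
      by_contra hne
      exact (Finset.disjoint_left.mp (hE.1 p p' hne) hx) hxp'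
    subst this
    exact hp'.symm
  · -- suppEq
    intro P g
    ext q
    simp only [mem_supp, Finset.mem_union, Finset.mem_image]
    rw [← Finset.nonempty_iff_ne_empty]
    constructor
    · rintro ⟨n, hn⟩
      rw [stepP_apply, Finset.mem_union] at hn
      rcases hn with hn | hn
      · exact Or.inr (Finset.ne_empty_of_mem hn)
      · obtain ⟨z, hz, -⟩ := Finset.mem_image.mp hn
        obtain ⟨p, rfl, hp⟩ := mem_dotAct.mp hz
        exact Or.inl ⟨p, Finset.ne_empty_of_mem hp, rfl⟩
    · rintro (⟨p, hp, rfl⟩ | h)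
      · obtain ⟨x, hx⟩ := Finset.nonempty_iff_ne_empty.mpr hp
        refine ⟨x + vMax (dotAct P g), ?_⟩
        rw [stepP_apply]
        exact Finset.mem_union_right _
          (Finset.mem_image.mpr ⟨x, mem_dotAct.mpr ⟨p, rfl, hx⟩, rfl⟩)
      · obtain ⟨x, hx⟩ := Finset.nonempty_iff_ne_empty.mpr h
        exact ⟨x, by rw [stepP_apply]; exact Finset.mem_union_left _ hx⟩
  · -- inv
    intro k P g hE
    have hsupd : univ.sup (dotAct P g) = Finset.Icc 1 (2 ^ k) := by
      rw [sup_dotAct, hE.2]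
    have hmaxd : vMax (dotAct P g) = 2 ^ k := vMax_eq hsupd
    have h1 : 1 ≤ 2 ^ k := Nat.one_le_pow k 2 (by norm_num)
    have h2 : 2 ^ (k + 1) = 2 ^ k + 2 ^ k := by rw [pow_succ]; omega
    have hdd := dotAct_disjoint (g := g) hE.1
    constructor
    · intro q q' hne
      rw [Finset.disjoint_left]
      intro n hn hn'
      rw [stepP_apply, Finset.mem_union] at hn hn'
      rcases hn with hn | hn <;> rcases hn' with hn' | hn'
      · exact (Finset.disjoint_left.mp (hE.1 q q' hne) hn) hn'
      · obtain ⟨z, hz, hzz⟩ := Finset.mem_image.mp hn'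
        have hb1 := Finset.mem_Icc.mp (entry_subset hE.2 q hn)
        have hb2 := Finset.mem_Icc.mp (entry_subset hsupd q' hz)
        rw [hmaxd] at hzz
        omega
      · obtain ⟨z, hz, hzz⟩ := Finset.mem_image.mp hn
        have hb1 := Finset.mem_Icc.mp (entry_subset hE.2 q' hn')
        have hb2 := Finset.mem_Icc.mp (entry_subset hsupd q hz)
        rw [hmaxd] at hzz
        omega
      · obtain ⟨z, hz, hzz⟩ := Finset.mem_image.mp hn
        obtain ⟨z', hz', hzz'⟩ := Finset.mem_image.mp hn'
        have : z = z' := by rw [hmaxd] at hzz hzz'; omega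
        subst this
        exact (Finset.disjoint_left.mp (hdd q q' hne) hz) hz'
    · ext n
      rw [mem_sup_univ, Finset.mem_Icc]
      constructor
      · rintro ⟨q, hq⟩
        rw [stepP_apply, Finset.mem_union] at hq
        rcases hq with hq | hq
        · have := Finset.mem_Icc.mp (entry_subset hE.2 q hq)
          omega
        · obtain ⟨z, hz, hzz⟩ := Finset.mem_image.mp hq
          have := Finset.mem_Icc.mp (entry_subset hsupd q hz)
          rw [hmaxd] at hzz
          omega
      · rintro ⟨hn1, hn2⟩
        by_cases hle : n ≤ 2 ^ k
        · have : n ∈ univ.sup P := by rw [hE.2]; exact Finset.mem_Icc.mpr ⟨hn1, hle⟩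
          obtain ⟨p, hp⟩ := mem_sup_univ.mp this
          exact ⟨p, by rw [stepP_apply]; exact Finset.mem_union_left _ hp⟩
        · have : n - 2 ^ k ∈ univ.sup (dotAct P g) := by
            rw [hsupd]; exact Finset.mem_Icc.mpr ⟨by omega, by omega⟩
          obtain ⟨p, hp⟩ := mem_sup_univ.mp this
          exact ⟨p, by
            rw [stepP_apply]
            exact Finset.mem_union_right _
              (Finset.mem_image.mpr ⟨n - 2 ^ k, hp, by rw [hmaxd]; omega⟩)⟩

section Machine
variable {m : ℕ} {step : (Fin m → Finset ℕ) → (Fin m → Fin m) → (Fin m → Finset ℕ)}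

lemma baseVec_isEXP (hm : 1 ≤ m) : IsEXP 0 (baseVec m) := by
  constructor
  · intro p q hne
    by_cases hp : p.val = 0 <;> by_cases hq : q.val = 0
    · exact absurd (Fin.ext (by omega)) hne
    · simp [baseVec, hp, hq]
    · simp [baseVec, hp, hq]
    · simp [baseVec, hp, hq]
  · ext n
    rw [mem_sup_univ, pow_zero, Finset.mem_Icc]
    constructor
    · rintro ⟨p, hp⟩
      by_cases h : p.val = 0
      · simp only [baseVec, if_pos h, Finset.mem_singleton] at hp
        omega
      · simp [baseVec, if_neg h] at hp
    · intro hn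
      refine ⟨⟨0, hm⟩, ?_⟩
      show n ∈ if (0 : ℕ) = 0 then ({1} : Finset ℕ) else ∅
      rw [if_pos rfl, Finset.mem_singleton]
      omega

lemma chain_isEXP (hm : 1 ≤ m) (hs : StepGood m step) :
    ∀ k, ∀ L ∈ chain step k, IsEXP k L := by
  intro k
  induction k with
  | zero =>
    intro L hL
    rw [chain, Finset.mem_singleton] at hL
    rw [hL]
    exact baseVec_isEXP hm
  | succ k ih =>
    intro L hL
    rw [chain] at hL
    obtain ⟨x, hx, rfl⟩ := Finset.mem_image.mp hL
    have := Finset.mem_product.mp hx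
    exact hs.inv k x.1 x.2 (ih x.1 this.1)

lemma nne_bounds (hm : 1 ≤ m) {k : ℕ} {L : Fin m → Finset ℕ} (hE : IsEXP k L) :
    1 ≤ nne L ∧ nne L ≤ m := by
  constructor
  · have h1 : (1 : ℕ) ∈ univ.sup L := by
      rw [hE.2]
      exact Finset.mem_Icc.mpr ⟨le_refl _, Nat.one_le_pow k 2 (by norm_num)⟩
    obtain ⟨p, hp⟩ := mem_sup_univ.mp h1
    rw [nne_eq_supp]
    exact Finset.card_pos.mpr ⟨p, mem_supp.mpr (Finset.ne_empty_of_mem hp)⟩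
  · rw [nne_eq_supp]
    calc (supp L).card ≤ (univ : Finset (Fin m)).card := Finset.card_le_card (Finset.subset_univ _)
    _ = m := by rw [Finset.card_univ, Fintype.card_fin]

lemma mem_chain_succ {k : ℕ} {M : Fin m → Finset ℕ} :
    M ∈ chain step (k + 1) ↔ ∃ L ∈ chain step k, ∃ f, step L f = M := by
  rw [chain]
  constructor
  · intro h
    obtain ⟨x, hx, rfl⟩ := Finset.mem_image.mp h
    exact ⟨x.1, (Finset.mem_product.mp hx).1, x.2, rfl⟩
  · rintro ⟨L, hL, f, rfl⟩
    exact Finset.mem_image.mpr ⟨(L, f),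
      Finset.mem_product.mpr ⟨hL, Finset.mem_univ _⟩, rfl⟩

lemma chain_succ_biUnion (k : ℕ) :
    chain step (k + 1) = (chain step k).biUnion (fun L => univ.image (step L)) := by
  ext M
  rw [mem_chain_succ, Finset.mem_biUnion]
  constructor
  · rintro ⟨L, hL, f, rfl⟩
    exact ⟨L, hL, Finset.mem_image.mpr ⟨f, Finset.mem_univ _, rfl⟩⟩
  · rintro ⟨L, hL, hM⟩
    obtain ⟨f, -, rfl⟩ := Finset.mem_image.mp hM
    exact ⟨L, hL, f, rfl⟩

lemma image_step_count (hm : 1 ≤ m) (hs : StepGood m step) {k : ℕ} {L : Fin m → Finset ℕ}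
    (hE : IsEXP k L) (j : ℕ) :
    (((univ : Finset (Fin m → Fin m)).image (step L)).filter (fun M => nne M = j)).card
    = ((univ : Finset ({p // p ∈ supp L} → Fin m)).filter
        (fun g => ((univ.image (fun p => g p)) ∪ supp L).card = j)).card := by
  have key : ∀ g : {p // p ∈ supp L} → Fin m,
      nne (step L (fun p => if h : p ∈ supp L then g ⟨p, h⟩ else ⟨0, hm⟩))
        = ((univ.image (fun p => g p)) ∪ supp L).card := by
    intro g
    rw [nne_eq_supp, hs.suppEq]
    congr 2
    ext y
    rw [Finset.mem_image, Finset.mem_image]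
    constructor
    · rintro ⟨p, hp, rfl⟩
      exact ⟨⟨p, hp⟩, Finset.mem_univ _, by rw [dif_pos hp]⟩
    · rintro ⟨p, -, rfl⟩
      exact ⟨p.val, p.2, by rw [dif_pos p.2]⟩
  symm
  refine Finset.card_bij
    (fun g _ => step L (fun p => if h : p ∈ supp L then g ⟨p, h⟩ else ⟨0, hm⟩)) ?_ ?_ ?_
  · intro g hg
    refine Finset.mem_filter.mpr ⟨Finset.mem_image.mpr ⟨_, Finset.mem_univ _, rfl⟩, ?_⟩
    rw [key g]
    exact (Finset.mem_filter.mp hg).2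
  · intro g hg g' hg' h
    have := (hs.inj k L L _ _ hE hE h).2
    funext x
    have hx := this x.val x.2
    rw [dif_pos x.2, dif_pos x.2] at hx
    exact hx
  · intro M hM
    have hM1 := (Finset.mem_filter.mp hM).1
    obtain ⟨f, -, rfl⟩ := Finset.mem_image.mp hM1
    refine ⟨fun p => f p.val, ?_, ?_⟩
    · refine Finset.mem_filter.mpr ⟨Finset.mem_univ _, ?_⟩
      rw [← key (fun p => f p.val)]
      have heq : step L (fun p => if h : p ∈ supp L then f p else ⟨0, hm⟩) = step L f := by
        apply hs.congr
        intro p hp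
        rw [dif_pos hp]
      rw [heq]
      exact (Finset.mem_filter.mp hM).2
    · apply hs.congr
      intro p hp
      rw [dif_pos hp]

lemma step_images_disjoint (hm : 1 ≤ m) (hs : StepGood m step) {k : ℕ}
    {L L' : Fin m → Finset ℕ} (hL : L ∈ chain step k) (hL' : L' ∈ chain step k)
    (hne : L ≠ L') :
    Disjoint ((univ : Finset (Fin m → Fin m)).image (step L))
      ((univ : Finset (Fin m → Fin m)).image (step L')) := by
  rw [Finset.disjoint_left]
  intro M hM hM'
  obtain ⟨f, -, rfl⟩ := Finset.mem_image.mp hM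
  obtain ⟨f', -, hf'⟩ := Finset.mem_image.mp hM'
  exact hne ((hs.inj k L L' f f' (chain_isEXP hm hs k L hL)
    (chain_isEXP hm hs k L' hL') hf'.symm).1)

lemma chain_count (hm : 1 ≤ m) (hs : StepGood m step) (k : ℕ) :
    ∀ j : Fin m, ((chain step k).filter (fun L => nne L = (j : ℕ) + 1)).card
      = (Smat m ^ k) ⟨0, hm⟩ j := by
  induction k with
  | zero =>
    intro j
    have hnne : nne (baseVec m) = 1 := by
      rw [nne_eq_supp]
      have : supp (baseVec m) = {(⟨0, hm⟩ : Fin m)} := by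
        ext q
        rw [mem_supp, Finset.mem_singleton]
        by_cases h : q.val = 0
        · simp only [baseVec, if_pos h]
          constructor
          · intro _; exact Fin.ext h
          · intro _; simp
        · simp only [baseVec, if_neg h]
          constructor
          · intro hx; exact absurd rfl hx
          · intro hq; exact absurd (congrArg Fin.val hq) (by simp [h])
      rw [this, Finset.card_singleton]
    show (Finset.filter _ {baseVec m}).card = (1 : Matrix (Fin m) (Fin m) ℕ) ⟨0, hm⟩ j
    rw [Finset.filter_singleton]
    by_cases hj : (⟨0, hm⟩ : Fin m) = j
    · subst hj
      rw [if_pos (by simp [hnne]), Matrix.one_apply_eq, Finset.card_singleton]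
    · rw [if_neg (by
        rw [hnne]
        intro h
        exact hj (Fin.ext (show (0 : ℕ) = (j : ℕ) by omega))),
        Matrix.one_apply_ne hj, Finset.card_empty]
  | succ k ih =>
    intro j
    rw [chain_succ_biUnion, Finset.filter_biUnion]
    rw [Finset.card_biUnion (fun L hL L' hL' hne =>
      Finset.disjoint_filter_filter (step_images_disjoint hm hs hL hL' hne))]
    have percount : ∀ L ∈ chain step k,
        (((univ : Finset (Fin m → Fin m)).image (step L)).filter
          (fun M => nne M = (j : ℕ) + 1)).card = sEntry m (nne L) ((j : ℕ) + 1) := by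
      intro L hL
      have hE := chain_isEXP hm hs k L hL
      rw [image_step_count hm hs hE]
      exact count_main m ((j : ℕ) + 1) (supp L) (nne L)
        (by rw [Fintype.card_coe, nne_eq_supp]) (nne_eq_supp L).symm
    rw [Finset.sum_congr rfl percount]
    have hmaps : ∀ L ∈ chain step k,
        (⟨min (nne L - 1) (m - 1), by omega⟩ : Fin m) ∈ (univ : Finset (Fin m)) :=
      fun L _ => Finset.mem_univ _
    rw [← Finset.sum_fiberwise_of_maps_to hmaps]
    have inner : ∀ i : Fin m, i ∈ (univ : Finset (Fin m)) →
        (∑ L ∈ (chain step k).filter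
          (fun L => (⟨min (nne L - 1) (m - 1), by omega⟩ : Fin m) = i),
            sEntry m (nne L) ((j : ℕ) + 1))
        = (Smat m ^ k) ⟨0, hm⟩ i * Smat m i j := by
      intro i _
      have hfil : (chain step k).filter
          (fun L => (⟨min (nne L - 1) (m - 1), by omega⟩ : Fin m) = i)
          = (chain step k).filter (fun L => nne L = (i : ℕ) + 1) := by
        apply Finset.filter_congr
        intro L hL
        have hb := nne_bounds hm (chain_isEXP hm hs k L hL)
        have hi := i.isLt
        rw [Fin.ext_iff]
        simp only [Fin.val_mk]
        constructor
        · intro h; omega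
        · intro h; omega
      rw [hfil]
      rw [Finset.sum_congr rfl (fun L hL => by rw [(Finset.mem_filter.mp hL).2])]
      rw [Finset.sum_const, smul_eq_mul, ih i]
      rfl
    rw [Finset.sum_congr rfl inner]
    rw [pow_succ, Matrix.mul_apply]

lemma chain_card (hm : 1 ≤ m) (hs : StepGood m step) (k : ℕ) :
    (chain step k).card = ∑ j : Fin m, (Smat m ^ k) ⟨0, hm⟩ j := by
  have hmaps : ∀ L ∈ chain step k,
      (⟨min (nne L - 1) (m - 1), by omega⟩ : Fin m) ∈ (univ : Finset (Fin m)) :=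
    fun L _ => Finset.mem_univ _
  rw [Finset.card_eq_sum_card_fiberwise hmaps]
  apply Finset.sum_congr rfl
  intro j _
  rw [← chain_count hm hs k j]
  congr 1
  apply Finset.filter_congr
  intro L hL
  have hb := nne_bounds hm (chain_isEXP hm hs k L hL)
  have hj := j.isLt
  rw [Fin.ext_iff]
  simp only [Fin.val_mk]
  constructor
  · intro h; omega
  · intro h; omega

end Machine

lemma Uset_eq_prod (m n : ℕ) (k : ℕ) :
    Uset m n k = (↑(chain (stepL (m := m)) k) : Set _) ×ˢ (↑(chain (stepP (m := n)) k) : Set _) := by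
  induction k with
  | zero =>
    ext x
    simp only [Uset, Set.mem_setOf_eq, Set.mem_prod, Finset.mem_coe, chain,
      Finset.mem_singleton]
    constructor
    · intro h
      rw [h]
      exact ⟨rfl, rfl⟩
    · rintro ⟨h1, h2⟩
      rw [Prod.ext_iff]
      exact ⟨h1, h2⟩
  | succ k ih =>
    ext x
    simp only [Uset, Set.mem_setOf_eq, Set.mem_prod, Finset.mem_coe]
    constructor
    · rintro ⟨L, P, hLP, f, g, rfl⟩
      rw [ih, Set.mem_prod] at hLP
      simp only [Finset.mem_coe] at hLP
      exact ⟨mem_chain_succ.mpr ⟨L, hLP.1, f, rfl⟩, mem_chain_succ.mpr ⟨P, hLP.2, g, rfl⟩⟩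
    · rintro ⟨h1, h2⟩
      obtain ⟨L, hL, f, hf⟩ := mem_chain_succ.mp h1
      obtain ⟨P, hP, g, hg⟩ := mem_chain_succ.mp h2
      refine ⟨L, P, ?_, f, g, ?_⟩
      · rw [ih, Set.mem_prod]
        exact ⟨hL, hP⟩
      · rw [Prod.ext_iff]
        exact ⟨hf.symm, hg.symm⟩

end PartC

theorem stmt13 (m n k : ℕ) (hm : 1 ≤ m) (hn : 1 ≤ n) :
    (Uset m n k).ncard =
      ∑ l' : Fin m, ∑ l'' : Fin n,
        (Smat m ^ k) ⟨0, by omega⟩ l' * (Smat n ^ k) ⟨0, by omega⟩ l'' := by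
  rw [Uset_eq_prod, ← Finset.coe_product, Set.ncard_coe_finset, Finset.card_product]
  rw [chain_card hm stepGoodL k, chain_card hn stepGoodP k, Finset.sum_mul_sum]
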